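/- Let σ: ℝ → ℝ be monotone and slope-restricted in [0,1]. Then there exists a proper convex function f: ℝ → ℝ ∪ {∞} such that σ(x) = argmin_u (1/2)(u-x)² + f(u) for all x ∈ ℝ. -/

import Mathlib

open MeasureTheory

noncomputable def phiFun (σ : ℝ → ℝ) (x : ℝ) : ℝ := ∫ t in (0:ℝ)..x, σ t

noncomputable def proxPot (σ : ℝ → ℝ) (u : ℝ) : EReal :=
  ⨆ z : ℝ, ((z * u - u ^ 2 / 2 - phiFun σ z : ℝ) : EReal)

lemma mul_coe_le_mul_ereal {t a : ℝ} (ht : 0 ≤ t) {B : EReal} (h : (a : EReal) ≤ B) :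
    ((t * a : ℝ) : EReal) ≤ (t : EReal) * B := by
  induction B with
  | bot => simp at h
  | coe b =>
      rw [← EReal.coe_mul, EReal.coe_le_coe_iff]
      exact mul_le_mul_of_nonneg_left (EReal.coe_le_coe_iff.1 h) ht
  | top =>
      rcases ht.eq_or_lt with rfl | ht'
      · simp
      · rw [EReal.mul_top_of_pos (by exact_mod_cast ht')]
        exact le_top

/-- Proposition 1 (converse direction): every monotone, slope-restricted
activation `σ` is the proximal operator of some proper convex function
`f : ℝ → ℝ ∪ {∞}`: for each `x`, `σ x` is the unique minimizer of
`u ↦ (1/2)(u - x)² + f(u)`. -/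
theorem slope_restricted_is_prox
    (σ : ℝ → ℝ)
    (hσ : ∀ x y : ℝ, x ≠ y →
      0 ≤ (σ x - σ y) / (x - y) ∧ (σ x - σ y) / (x - y) ≤ 1) :
    ∃ f : ℝ → EReal,
      (∃ x : ℝ, f x ≠ ⊤) ∧
      (∀ x y t : ℝ, 0 ≤ t → t ≤ 1 →
        f (t * x + (1 - t) * y) ≤ (t : EReal) * f x + ((1 - t : ℝ) : EReal) * f y) ∧
      (∀ x : ℝ,
        (∀ u : ℝ, (((1 / 2) * (σ x - x) ^ 2 : ℝ) : EReal) + f (σ x) ≤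
          (((1 / 2) * (u - x) ^ 2 : ℝ) : EReal) + f u) ∧
        (∀ u : ℝ, ((((1 / 2) * (u - x) ^ 2 : ℝ) : EReal) + f u ≤
          (((1 / 2) * (σ x - x) ^ 2 : ℝ) : EReal) + f (σ x)) → u = σ x)) := by
  -- basic consequences of the slope restriction
  have hmono : Monotone σ := by
    intro a b hab
    rcases hab.eq_or_lt with rfl | h
    · exact le_rfl
    · have h1 := (hσ b a (ne_of_gt h)).1
      have hba : (0:ℝ) < b - a := sub_pos.2 h
      have h2 := mul_le_mul_of_nonneg_right h1 hba.le
      rw [div_mul_cancel₀ _ (ne_of_gt hba)] at h2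
      linarith
  have hlip : ∀ a b : ℝ, a ≤ b → σ b ≤ σ a + (b - a) := by
    intro a b hab
    rcases hab.eq_or_lt with rfl | h
    · simp
    · have h1 := (hσ b a (ne_of_gt h)).2
      have hba : (0:ℝ) < b - a := sub_pos.2 h
      rw [div_le_one hba] at h1
      linarith
  have hcont : Continuous σ := by
    have : LipschitzWith 1 σ := by
      apply LipschitzWith.of_dist_le_mul
      intro a b
      rw [Real.dist_eq, Real.dist_eq, NNReal.coe_one, one_mul]
      rcases le_total a b with h | h
      · have h1 := hmono h
        have h2 := hlip a b h
        have h3 : a - b ≤ |a - b| := le_abs_self _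
        have h4 : -|a - b| ≤ a - b := neg_abs_le _
        rw [abs_le]
        constructor <;> linarith
      · have h1 := hmono h
        have h2 := hlip b a h
        have h3 : a - b ≤ |a - b| := le_abs_self _
        have h4 : -|a - b| ≤ a - b := neg_abs_le _
        rw [abs_le]
        constructor <;> linarith
    exact this.continuous
  have hint : ∀ a b : ℝ, IntervalIntegrable σ volume a b := fun a b =>
    hcont.intervalIntegrable a b
  set Φ : ℝ → ℝ := phiFun σ with hΦdef
  have hΦdiff : ∀ a b : ℝ, Φ b - Φ a = ∫ t in a..b, σ t := by
    intro a b
    have := intervalIntegral.integral_add_adjacent_intervals (hint 0 a) (hint a b)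
    simp only [hΦdef, phiFun]
    linarith
  -- integral bounds
  have L1 : ∀ a b : ℝ, a ≤ b → σ a * (b - a) ≤ ∫ t in a..b, σ t := by
    intro a b hab
    have := intervalIntegral.integral_mono_on hab (intervalIntegrable_const) (hint a b)
      (fun t ht => hmono ht.1)
    simpa [intervalIntegral.integral_const, smul_eq_mul, mul_comm] using this
  have L2 : ∀ a b : ℝ, a ≤ b → (∫ t in a..b, σ t) ≤ σ b * (b - a) := by
    intro a b hab
    have := intervalIntegral.integral_mono_on hab (hint a b) (intervalIntegrable_const)
      (fun t ht => hmono ht.2)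
    simpa [intervalIntegral.integral_const, smul_eq_mul, mul_comm] using this
  have lin_int : ∀ a b c : ℝ, (∫ t in a..b, (σ c + (t - c))) = σ c * (b - a) + ((b - c)^2 - (a - c)^2)/2 := by
    intro a b c
    have hi1 : IntervalIntegrable (fun _ : ℝ => σ c) volume a b := intervalIntegrable_const
    have hi2 : IntervalIntegrable (fun t : ℝ => t - c) volume a b :=
      ((continuous_id.sub continuous_const).intervalIntegrable a b)
    rw [intervalIntegral.integral_add hi1 hi2]
    have h2 : (∫ t in a..b, (t - c)) = ((b - c)^2 - (a - c)^2)/2 := by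
      have := intervalIntegral.integral_comp_sub_right (fun t => t) c (a := a) (b := b)
      rw [this, integral_id]
    rw [h2, intervalIntegral.integral_const, smul_eq_mul, mul_comm]
  have L3 : ∀ a b : ℝ, a ≤ b → (∫ t in a..b, σ t) ≤ σ a * (b - a) + (b - a)^2/2 := by
    intro a b hab
    have hi2 : IntervalIntegrable (fun t : ℝ => σ a + (t - a)) volume a b :=
      (continuous_const.add (continuous_id.sub continuous_const)).intervalIntegrable a b
    have := intervalIntegral.integral_mono_on hab (hint a b) hi2
      (fun t ht => by have := hlip a t ht.1; linarith)
    rw [lin_int a b a] at this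
    nlinarith [this]
  have L4 : ∀ a b : ℝ, a ≤ b → σ b * (b - a) - (b - a)^2/2 ≤ ∫ t in a..b, σ t := by
    intro a b hab
    have hi2 : IntervalIntegrable (fun t : ℝ => σ b + (t - b)) volume a b :=
      (continuous_const.add (continuous_id.sub continuous_const)).intervalIntegrable a b
    have := intervalIntegral.integral_mono_on hab hi2 (hint a b)
      (fun t ht => by have := hlip t b ht.2; linarith)
    rw [lin_int a b b] at this
    nlinarith [this]
  have grad : ∀ x z : ℝ, σ x * (z - x) ≤ Φ z - Φ x := by
    intro x z
    rcases le_total x z with h | h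
    · rw [hΦdiff x z]; exact L1 x z h
    · have h2 : Φ x - Φ z ≤ σ x * (x - z) := by rw [hΦdiff z x]; exact L2 z x h
      nlinarith [h2]
  have descent : ∀ z a : ℝ, Φ (z + a) ≤ Φ z + σ z * a + a^2/2 := by
    intro z a
    rcases le_total 0 a with h | h
    · have h3 := L3 z (z + a) (by linarith)
      rw [← hΦdiff z (z + a)] at h3
      nlinarith [h3]
    · have h4 := L4 (z + a) z (by linarith)
      rw [← hΦdiff (z + a) z] at h4
      nlinarith [h4]
  have hle_sup : ∀ v w : ℝ, ((w * v - v ^ 2 / 2 - Φ w : ℝ) : EReal) ≤ proxPot σ v :=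
    fun v w => le_iSup (fun z : ℝ => ((z * v - v ^ 2 / 2 - Φ z : ℝ) : EReal)) w
  refine ⟨proxPot σ, ?_, ?_, ?_⟩
  · -- properness
    refine ⟨σ 0, ?_⟩
    have hub : proxPot σ (σ 0) ≤ ((-(σ 0)^2/2 : ℝ) : EReal) := by
      apply iSup_le
      intro z
      rw [EReal.coe_le_coe_iff]
      have h0 : Φ 0 = 0 := by simp [hΦdef, phiFun]
      have := grad 0 z
      nlinarith [this]
    exact ne_top_of_le_ne_top (EReal.coe_ne_top _) hub
  · -- convexity
    intro x y t ht0 ht1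
    apply iSup_le
    intro z
    have ht1' : (0:ℝ) ≤ 1 - t := by linarith
    set u : ℝ := t * x + (1 - t) * y with hu
    set z1 : ℝ := z + (1 - t) * (x - y) with hz1
    set z2 : ℝ := z + (-(t * (x - y))) with hz2
    have hA : ((z1 * x - x ^ 2 / 2 - Φ z1 : ℝ) : EReal) ≤ proxPot σ x := hle_sup x z1
    have hB : ((z2 * y - y ^ 2 / 2 - Φ z2 : ℝ) : EReal) ≤ proxPot σ y := hle_sup y z2
    have d1 : Φ z1 ≤ Φ z + σ z * ((1 - t) * (x - y)) + ((1 - t) * (x - y))^2/2 := descent z _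
    have d2 : Φ z2 ≤ Φ z + σ z * (-(t * (x - y))) + (-(t * (x - y)))^2/2 := descent z _
    have key : z * u - u ^ 2 / 2 - Φ z ≤
        t * (z1 * x - x ^ 2 / 2 - Φ z1) + (1 - t) * (z2 * y - y ^ 2 / 2 - Φ z2) := by
      have p1 := mul_le_mul_of_nonneg_left d1 ht0
      have p2 := mul_le_mul_of_nonneg_left d2 ht1'
      rw [hu, hz1, hz2]
      rw [hz1] at p1
      rw [hz2] at p2
      nlinarith [p1, p2, mul_nonneg ht0 ht1', sq_nonneg (x - y)]
    calc ((z * u - u ^ 2 / 2 - Φ z : ℝ) : EReal)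
        ≤ ((t * (z1 * x - x ^ 2 / 2 - Φ z1) + (1 - t) * (z2 * y - y ^ 2 / 2 - Φ z2) : ℝ) : EReal) :=
          EReal.coe_le_coe_iff.2 key
      _ = ((t * (z1 * x - x ^ 2 / 2 - Φ z1) : ℝ) : EReal) +
          (((1 - t) * (z2 * y - y ^ 2 / 2 - Φ z2) : ℝ) : EReal) := EReal.coe_add _ _
      _ ≤ (t : EReal) * proxPot σ x + ((1 - t : ℝ) : EReal) * proxPot σ y :=
          add_le_add (mul_coe_le_mul_ereal ht0 hA) (mul_coe_le_mul_ereal ht1' hB)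
  · -- minimization
    intro x
    have hfσ : proxPot σ (σ x) = ((x * σ x - (σ x) ^ 2 / 2 - Φ x : ℝ) : EReal) := by
      apply le_antisymm
      · apply iSup_le
        intro z
        rw [EReal.coe_le_coe_iff]
        have := grad x z
        nlinarith [this]
      · exact hle_sup (σ x) x
    constructor
    · intro u
      have h1 : ((x * u - u ^ 2 / 2 - Φ x : ℝ) : EReal) ≤ proxPot σ u := hle_sup u x
      rw [hfσ, ← EReal.coe_add]
      calc (((1 / 2) * (σ x - x) ^ 2 + (x * σ x - (σ x) ^ 2 / 2 - Φ x) : ℝ) : EReal)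
          = (((1 / 2) * (u - x) ^ 2 + (x * u - u ^ 2 / 2 - Φ x) : ℝ) : EReal) := by
            rw [EReal.coe_eq_coe_iff]; ring
        _ = (((1 / 2) * (u - x) ^ 2 : ℝ) : EReal) + ((x * u - u ^ 2 / 2 - Φ x : ℝ) : EReal) :=
            EReal.coe_add _ _
        _ ≤ (((1 / 2) * (u - x) ^ 2 : ℝ) : EReal) + proxPot σ u := add_le_add le_rfl h1
    · intro u hu
      have hbot : proxPot σ u ≠ ⊥ := by
        intro hb
        have h1 : ((x * u - u ^ 2 / 2 - Φ x : ℝ) : EReal) ≤ proxPot σ u := hle_sup u x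
        rw [hb] at h1
        exact (EReal.coe_ne_bot _) (le_bot_iff.1 h1)
      have htop : proxPot σ u ≠ ⊤ := by
        intro ht
        rw [hfσ, ht, ← EReal.coe_add, EReal.coe_add_top] at hu
        exact (EReal.coe_ne_top _) (top_le_iff.1 hu)
      obtain ⟨r, hr⟩ : ∃ r : ℝ, proxPot σ u = (r : EReal) :=
        ⟨(proxPot σ u).toReal, (EReal.coe_toReal htop hbot).symm⟩
      rw [hfσ, hr, ← EReal.coe_add, ← EReal.coe_add, EReal.coe_le_coe_iff] at hu
      have hz : ∀ z : ℝ, z * u - u ^ 2 / 2 - Φ z ≤ r := by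
        intro z
        have := hle_sup u z
        rw [hr, EReal.coe_le_coe_iff] at this
        exact this
      have hkey : ∀ z : ℝ, (z - x) * u ≤ Φ z - Φ x := by
        intro z
        have := hz z
        nlinarith [hu, hz x]
      have hle : u ≤ σ x := by
        apply le_of_forall_pos_le_add
        intro ε hε
        have h1 := hkey (x + ε)
        have h2 : Φ (x + ε) - Φ x ≤ σ (x + ε) * ε := by
          have := L2 x (x + ε) (by linarith)
          rw [← hΦdiff x (x + ε)] at this
          nlinarith [this]
        have h3 : σ (x + ε) ≤ σ x + ε := by
          have := hlip x (x + ε) (by linarith)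
          linarith
        nlinarith [h1, h2, h3]
      have hge : σ x ≤ u := by
        apply le_of_forall_pos_le_add
        intro ε hε
        have h1 := hkey (x - ε)
        have h2 : σ (x - ε) * ε ≤ Φ x - Φ (x - ε) := by
          have := L1 (x - ε) x (by linarith)
          rw [← hΦdiff (x - ε) x] at this
          nlinarith [this]
        have h3 : σ x ≤ σ (x - ε) + ε := by
          have := hlip (x - ε) x (by linarith)
          linarith
        nlinarith [h1, h2, h3]
      linarith
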